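/- arXiv:2012.04133 — 3 statements merged into one kernel-verified Lean document; each statement's English description precedes it below -/
import Mathlib

section
/- (Prediction step containment) Suppose x_{k+1} = A x_k + B u_k + G w_k where x_k = x̂ + E z with |z| ≤ 1, P = E Eᵀ, and wᵀ Q^{−1} w ≤ 1 for Q positive definite. Define x̂⁺ = A x̂ + B u_k. If there exist τ_3, τ_4 ≥ 0 and positive definite P⁺ such that [A E, G]ᵀ (P⁺)^{−1} [A E, G] − diag(τ_3 I, τ_4 Q^{−1}) ⪯ 0 and τ_3 + τ_4 ≤ 1, then (x_{k+1} − x̂⁺)ᵀ (P⁺)^{−1} (x_{k+1} − x̂⁺) ≤ 1. -/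
open Matrix Filter

noncomputable def opNorm {m n : Type*} [Fintype m] [Fintype n] [DecidableEq n]
    (A : Matrix m n ℝ) : ℝ :=
  ‖LinearMap.toContinuousLinearMap (Matrix.toEuclideanLin A)‖

/-- `M ⪯ 0` : the symmetric matrix `M` is negative semidefinite. -/
def Matrix.NegSemidef {n : Type*} [Fintype n] (M : Matrix n n ℝ) : Prop :=
  (-M).PosSemidef

theorem prediction_step_containment {n m w : ℕ}
    (A : Matrix (Fin n) (Fin n) ℝ) (B : Matrix (Fin n) (Fin m) ℝ)
    (G : Matrix (Fin n) (Fin w) ℝ) (E P Pplus : Matrix (Fin n) (Fin n) ℝ)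
    (Q : Matrix (Fin w) (Fin w) ℝ)
    (x xnext xhat u' : Fin n → ℝ) (uk : Fin m → ℝ) (z : Fin n → ℝ) (wk : Fin w → ℝ)
    (hQ : Q.PosDef) (hP : P.PosDef) (hPplus : Pplus.PosDef)
    (hfac : P = E * Eᵀ) (hz : z ⬝ᵥ z ≤ 1) (hw : wk ⬝ᵥ Q⁻¹.mulVec wk ≤ 1)
    (hx : x = xhat + E.mulVec z)
    (hdyn : xnext = A.mulVec x + B.mulVec uk + G.mulVec wk)
    (τ₃ τ₄ : ℝ) (hτ₃ : 0 ≤ τ₃) (hτ₄ : 0 ≤ τ₄) (hτ : τ₃ + τ₄ ≤ 1)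
    (hlmi : ((Matrix.fromCols (A * E) G)ᵀ * Pplus⁻¹ * Matrix.fromCols (A * E) G -
      Matrix.fromBlocks (τ₃ • (1 : Matrix (Fin n) (Fin n) ℝ)) 0 0
        (τ₄ • Q⁻¹)).NegSemidef) :
    (xnext - (A.mulVec xhat + B.mulVec uk)) ⬝ᵥ
      Pplus⁻¹.mulVec (xnext - (A.mulVec xhat + B.mulVec uk)) ≤ 1 := by
  set F := Matrix.fromCols (A * E) G with hF
  set v : Fin n ⊕ Fin w → ℝ := Sum.elim z wk with hv
  have hd : xnext - (A.mulVec xhat + B.mulVec uk) = F.mulVec v := by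
    subst hdyn hx
    simp [hF, hv, mulVec_add, mulVec_mulVec]
    abel
  rw [hd]
  have key := hlmi.dotProduct_mulVec_nonneg v
  simp only [neg_mulVec, sub_mulVec, dotProduct_neg, dotProduct_sub, star_trivial] at key
  have h1 : v ⬝ᵥ (Fᵀ * Pplus⁻¹ * F).mulVec v = (F.mulVec v) ⬝ᵥ Pplus⁻¹.mulVec (F.mulVec v) := by
    rw [← mulVec_mulVec, ← mulVec_mulVec, dotProduct_mulVec, vecMul_transpose]
  have h2 : v ⬝ᵥ (Matrix.fromBlocks (τ₃ • (1 : Matrix (Fin n) (Fin n) ℝ)) 0 0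
      (τ₄ • Q⁻¹)).mulVec v = τ₃ * (z ⬝ᵥ z) + τ₄ * (wk ⬝ᵥ Q⁻¹.mulVec wk) := by
    simp [hv, fromBlocks_mulVec, smul_mulVec, dotProduct_smul, smul_eq_mul]
  have hmain : (F.mulVec v) ⬝ᵥ Pplus⁻¹.mulVec (F.mulVec v) ≤ τ₃ * (z ⬝ᵥ z) + τ₄ * (wk ⬝ᵥ Q⁻¹.mulVec wk) := by
    rw [← h1, ← h2]; linarith [key]
  calc (F.mulVec v) ⬝ᵥ Pplus⁻¹.mulVec (F.mulVec v)
      ≤ τ₃ * (z ⬝ᵥ z) + τ₄ * (wk ⬝ᵥ Q⁻¹.mulVec wk) := hmain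
    _ ≤ τ₃ * 1 + τ₄ * 1 := add_le_add (mul_le_mul_of_nonneg_left hz hτ₃) (mul_le_mul_of_nonneg_left hw hτ₄)
    _ ≤ 1 := by linarith
end

section
/- Let Γ be an N×N matrix with eigenvalues Λ_1, …, Λ_N and define A_c = (I_N ⊗ A) − c Γ ⊗ (B K). Then ρ(A_c) < 1 if and only if ρ(A − c Λ_i B K) < 1 for all i = 1, …, N. -/
open Matrix Filter Kronecker

lemma mem_spec_iff {ι : Type*} [Fintype ι] [DecidableEq ι] (M : Matrix ι ι ℂ) (z : ℂ) :
    z ∈ spectrum ℂ M ↔ ∃ v ≠ 0, M.mulVec v = z • v := by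
  rw [spectrum.mem_iff, Matrix.isUnit_iff_isUnit_det, isUnit_iff_ne_zero, not_not,
    ← Matrix.exists_mulVec_eq_zero_iff]
  constructor <;> rintro ⟨v, hv, h⟩ <;> refine ⟨v, hv, ?_⟩
  · have := h
    rw [Matrix.sub_mulVec, Algebra.algebraMap_eq_smul_one, Matrix.smul_mulVec,
      Matrix.one_mulVec, sub_eq_zero] at this
    exact this.symm
  · rw [Matrix.sub_mulVec, Algebra.algebraMap_eq_smul_one, Matrix.smul_mulVec,
      Matrix.one_mulVec, sub_eq_zero, h]

lemma spec_transpose {ι : Type*} [Fintype ι] [DecidableEq ι] (M : Matrix ι ι ℂ) :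
    spectrum ℂ Mᵀ = spectrum ℂ M := by
  ext z
  simp only [spectrum.mem_iff, Matrix.isUnit_iff_isUnit_det]
  rw [show (algebraMap ℂ (Matrix ι ι ℂ)) z - Mᵀ =
    ((algebraMap ℂ (Matrix ι ι ℂ)) z - M)ᵀ by
      rw [Matrix.transpose_sub]; congr 1
      simp [Algebra.algebraMap_eq_smul_one],
    Matrix.det_transpose]

lemma spec_mulVecLin {ι : Type*} [Fintype ι] [DecidableEq ι] (M : Matrix ι ι ℂ) :
    spectrum ℂ (M.mulVecLin) = spectrum ℂ M := by
  have : M.mulVecLin = Matrix.toLinAlgEquiv' M := by ext v; simp [Matrix.toLinAlgEquiv'_apply]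
  rw [this, AlgEquiv.spectrum_eq]

lemma kron_mulVec {k l : ℕ} (X : Matrix (Fin k) (Fin k) ℂ) (Y : Matrix (Fin l) (Fin l) ℂ)
    (w : Fin k → ℂ) (v : Fin l → ℂ) :
    (X ⊗ₖ Y).mulVec (fun p => w p.1 * v p.2) =
      fun p => X.mulVec w p.1 * Y.mulVec v p.2 := by
  funext ⟨i, p⟩
  simp only [Matrix.mulVec, dotProduct, Fintype.sum_prod_type, kroneckerMap_apply,
    Finset.sum_mul, Finset.mul_sum]
  rw [Finset.sum_comm]
  exact Finset.sum_congr rfl fun j _ => Finset.sum_congr rfl fun q _ => by ring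

lemma spectrum_kron {n N : ℕ} (A C : Matrix (Fin n) (Fin n) ℂ) (Γ : Matrix (Fin N) (Fin N) ℂ)
    (Λ : Fin N → ℂ) (hΛ : spectrum ℂ Γ = Set.range Λ) (c : ℂ) :
    spectrum ℂ (((1 : Matrix (Fin N) (Fin N) ℂ) ⊗ₖ A) - c • (Γ ⊗ₖ C)) =
      ⋃ i, spectrum ℂ (A - (c * Λ i) • C) := by
  ext z
  simp only [Set.mem_iUnion]
  constructor
  · -- hard direction
    intro hz
    by_contra hns
    push_neg at hns
    obtain ⟨u, hu0, hu⟩ := (mem_spec_iff _ z).mp hz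
    set Y : Matrix (Fin n) (Fin N) ℂ := Matrix.of (fun p j => u (j, p)) with hY
    -- pointwise consequence of hu
    have E : ∀ j p, (∑ q, A p q * u (j, q)) - c * ∑ k, Γ j k * ∑ q, C p q * u (k, q)
        = z * u (j, p) := by
      intro j p
      have h0 := congrFun hu (j, p)
      simp only [Matrix.mulVec, dotProduct, Matrix.sub_apply, Matrix.smul_apply,
        kroneckerMap_apply, Matrix.one_apply, Fintype.sum_prod_type, Pi.smul_apply,
        smul_eq_mul] at h0
      have h1 : ∀ x, ∑ x1, ((if j = x then 1 else 0) * A p x1 - c * (Γ j x * C p x1)) * u (x, x1)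
          = (if j = x then 1 else 0) * (∑ x1, A p x1 * u (x, x1))
            - c * (Γ j x * ∑ x1, C p x1 * u (x, x1)) := by
        intro x
        rw [Finset.mul_sum, Finset.mul_sum, Finset.mul_sum, ← Finset.sum_sub_distrib]
        exact Finset.sum_congr rfl fun x1 _ => by ring
      simp only [h1] at h0
      simp only [Finset.sum_sub_distrib, ite_mul, one_mul, zero_mul, Finset.sum_ite_eq,
        Finset.mem_univ, if_true, ← Finset.mul_sum] at h0
      exact h0
    -- the matrix identity
    have hmat : (A - z • 1) * Y = c • (C * (Y * Γᵀ)) := by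
      ext p j
      have := E j p
      simp only [Matrix.mul_apply, Matrix.sub_apply, Matrix.smul_apply, Matrix.one_apply,
        smul_eq_mul, hY, Matrix.of_apply, Matrix.transpose_apply]
      have hR : (∑ x, C p x * ∑ x1, u (x1, x) * Γ j x1)
          = ∑ k, Γ j k * ∑ q, C p q * u (k, q) := by
        simp only [Finset.mul_sum]
        rw [Finset.sum_comm]
        exact Finset.sum_congr rfl fun k _ => Finset.sum_congr rfl fun q _ => by ring
      have hL : ∑ x, (A p x - z * (if p = x then 1 else 0)) * u (j, x)
          = (∑ q, A p q * u (j, q)) - z * u (j, p) := by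
        have h2 : ∀ x, (A p x - z * (if p = x then 1 else 0)) * u (j, x)
            = A p x * u (j, x) - z * ((if p = x then 1 else 0) * u (j, x)) := fun x => by ring
        simp only [h2, Finset.sum_sub_distrib, ite_mul, one_mul, zero_mul, ← Finset.mul_sum,
          Finset.sum_ite_eq, Finset.mem_univ, if_true]
      rw [hL, hR]
      linear_combination this
    have key : ∀ w : Fin N → ℂ,
        (A - z • 1).mulVec (Y.mulVec w) = c • C.mulVec (Y.mulVec (Γᵀ.mulVec w)) := by
      intro w
      rw [Matrix.mulVec_mulVec, hmat, Matrix.mulVec_mulVec, Matrix.mulVec_mulVec,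
        ← Matrix.smul_mulVec, Matrix.mul_assoc]
    have kerstep : ∀ (μ : ℂ), IsUnit (A - z • 1 - (c * μ) • C) → ∀ k : ℕ,
        ∀ x : Fin N → ℂ, ((Γᵀ.mulVecLin - μ • 1) ^ k) x = 0 → Y.mulVec x = 0 := by
      intro μ hμ k
      induction k with
      | zero =>
        intro x hx
        simp only [pow_zero, Module.End.one_apply] at hx
        rw [hx, Matrix.mulVec_zero]
      | succ k ih =>
        intro x hx
        rw [pow_succ, Module.End.mul_apply] at hx
        have h1 : Y.mulVec ((Γᵀ.mulVecLin - μ • 1) x) = 0 := ih _ hx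
        have h2 : Y.mulVec (Γᵀ.mulVec x) = μ • Y.mulVec x := by
          have e : (Γᵀ.mulVecLin - μ • (1 : Module.End ℂ (Fin N → ℂ))) x
              = Γᵀ.mulVec x - μ • x := by
            simp [Matrix.mulVec_transpose]
          rw [e, Matrix.mulVec_sub, Matrix.mulVec_smul, sub_eq_zero] at h1
          exact h1
        have h4 : (A - z • 1 - (c * μ) • C).mulVec (Y.mulVec x) = 0 := by
          rw [Matrix.sub_mulVec, Matrix.smul_mulVec, key x, h2,
            Matrix.mulVec_smul, smul_smul, sub_self]
        by_contra hne
        have hdet : (A - z • 1 - (c * μ) • C).det = 0 :=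
          Matrix.exists_mulVec_eq_zero_iff.mp ⟨_, hne, h4⟩
        exact (isUnit_iff_ne_zero.mp ((Matrix.isUnit_iff_isUnit_det _).mp hμ)) hdet
    have hker : ∀ μ : ℂ, Module.End.maxGenEigenspace (Γᵀ.mulVecLin) μ ≤ LinearMap.ker Y.mulVecLin := by
      intro μ
      by_cases hμs : μ ∈ spectrum ℂ Γ
      · obtain ⟨i, rfl⟩ := (hΛ ▸ hμs : μ ∈ Set.range Λ)
        have hz' := hns i
        rw [spectrum.mem_iff, not_not] at hz'
        have hunit : IsUnit (A - z • 1 - (c * Λ i) • C) := by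
          have e : A - z • 1 - (c * Λ i) • C
              = -(algebraMap ℂ (Matrix (Fin n) (Fin n) ℂ) z - (A - (c * Λ i) • C)) := by
            rw [Algebra.algebraMap_eq_smul_one]; abel
          rw [e]
          exact hz'.neg
        intro x hx
        obtain ⟨k, hk⟩ := (Module.End.mem_maxGenEigenspace _ _ _).mp hx
        exact LinearMap.mem_ker.mpr (kerstep _ hunit k x hk)
      · have hbot : Module.End.maxGenEigenspace (Γᵀ.mulVecLin) μ = ⊥ := by
          by_contra hb
          have hev : Module.End.HasEigenvalue (Γᵀ.mulVecLin) μ :=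
            Module.End.HasUnifEigenvalue.lt zero_lt_one hb
          have := Module.End.hasEigenvalue_iff_mem_spectrum.mp hev
          rw [spec_mulVecLin, spec_transpose] at this
          exact hμs this
        rw [hbot]
        exact bot_le
    have hkertop : LinearMap.ker Y.mulVecLin = ⊤ := by
      refine top_unique ?_
      rw [← Module.End.iSup_maxGenEigenspace_eq_top (Γᵀ.mulVecLin)]
      exact iSup_le hker
    have hY0 : Y.mulVecLin = 0 := LinearMap.ker_eq_top.mp hkertop
    apply hu0
    funext jp
    have := congrFun (congrArg DFunLike.coe hY0) (Pi.single jp.1 1)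
    simp only [Matrix.mulVecLin_apply, LinearMap.zero_apply] at this
    have h5 := congrFun this jp.2
    rw [Matrix.mulVec_single] at h5
    simpa [hY] using h5
  · rintro ⟨i, hi⟩
    obtain ⟨v, hv0, hv⟩ := (mem_spec_iff _ z).mp hi
    have hΛi : Λ i ∈ spectrum ℂ Γ := hΛ ▸ Set.mem_range_self i
    obtain ⟨w, hw0, hw⟩ := (mem_spec_iff _ (Λ i)).mp hΛi
    refine (mem_spec_iff _ z).mpr ⟨fun p => w p.1 * v p.2, ?_, ?_⟩
    · obtain ⟨i0, hi0⟩ := Function.ne_iff.mp hw0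
      obtain ⟨p0, hp0⟩ := Function.ne_iff.mp hv0
      exact Function.ne_iff.mpr ⟨(i0, p0), mul_ne_zero hi0 hp0⟩
    · have hv' : ∀ p, A.mulVec v p = z * v p + c * Λ i * C.mulVec v p := by
        intro p
        have := congrFun hv p
        simp only [Matrix.sub_mulVec, Matrix.smul_mulVec, Pi.sub_apply, Pi.smul_apply,
          smul_eq_mul] at this
        linear_combination this
      have hw' : ∀ j, Γ.mulVec w j = Λ i * w j := by
        intro j
        have := congrFun hw j
        simpa using this
      rw [Matrix.sub_mulVec, Matrix.smul_mulVec, kron_mulVec, kron_mulVec]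
      funext jp
      simp only [Pi.sub_apply, Pi.smul_apply, smul_eq_mul, Matrix.one_mulVec, hv' jp.2, hw' jp.1]
      ring

theorem spectral_radius_Ac_iff {n m N : ℕ}
    (A : Matrix (Fin n) (Fin n) ℝ) (B : Matrix (Fin n) (Fin m) ℝ)
    (K : Matrix (Fin m) (Fin n) ℝ) (c : ℝ) (hc : 0 < c)
    (Γ : Matrix (Fin N) (Fin N) ℝ) (Λ : Fin N → ℂ)
    (hΛ : spectrum ℂ (Γ.map (algebraMap ℝ ℂ)) = Set.range Λ) :
    spectralRadius ℂ
        ((((1 : Matrix (Fin N) (Fin N) ℝ) ⊗ₖ A) - c • (Γ ⊗ₖ (B * K))).map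
          (algebraMap ℝ ℂ)) < 1 ↔
      ∀ i : Fin N,
        spectralRadius ℂ
          (A.map (algebraMap ℝ ℂ) -
            ((c : ℂ) * Λ i) • ((B * K).map (algebraMap ℝ ℂ))) < 1 := by
  have hmap : ((((1 : Matrix (Fin N) (Fin N) ℝ) ⊗ₖ A) - c • (Γ ⊗ₖ (B * K))).map
        (algebraMap ℝ ℂ))
      = ((1 : Matrix (Fin N) (Fin N) ℂ) ⊗ₖ (A.map (algebraMap ℝ ℂ)))
        - (c : ℂ) • ((Γ.map (algebraMap ℝ ℂ)) ⊗ₖ ((B * K).map (algebraMap ℝ ℂ))) := by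
    ext ⟨i, p⟩ ⟨j, q⟩
    simp only [Matrix.map_apply, Matrix.sub_apply, Matrix.smul_apply, kroneckerMap_apply,
      Matrix.one_apply, smul_eq_mul, Complex.coe_algebraMap]
    split_ifs <;> push_cast <;> ring
  have hspec := spectrum_kron (A.map (algebraMap ℝ ℂ)) ((B * K).map (algebraMap ℝ ℂ))
    (Γ.map (algebraMap ℝ ℂ)) Λ hΛ (c : ℂ)
  rw [hmap]
  simp only [spectralRadius, hspec, iSup_iUnion]
  constructor
  · intro h i
    exact lt_of_le_of_lt
      (le_iSup (fun i => ⨆ a ∈ spectrum ℂ (A.map (algebraMap ℝ ℂ) -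
        ((c : ℂ) * Λ i) • ((B * K).map (algebraMap ℝ ℂ))), (‖a‖₊ : ENNReal)) i) h
  · intro h
    rw [← Finset.sup_univ_eq_iSup]
    exact (Finset.sup_lt_iff (by norm_num)).mpr fun i _ => h i
end

section
/- (Discrete Lyapunov stability) Let M be an n×n real matrix and suppose there exist symmetric positive definite matrices P and Q with Mᵀ P M − P = −Q. Then the spectral radius of M is strictly less than 1. -/
open Matrix Filter Kronecker

lemma quad_re_pos_aux {n : ℕ} {P : Matrix (Fin n) (Fin n) ℝ} (hP : P.PosDef)
    (v : Fin n → ℂ) (hv : v ≠ 0) :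
    0 < (star v ⬝ᵥ ((P.map (algebraMap ℝ ℂ)) *ᵥ v)).re := by
  set a : Fin n → ℝ := fun i => (v i).re with ha
  set b : Fin n → ℝ := fun i => (v i).im with hb
  have key : (star v ⬝ᵥ ((P.map (algebraMap ℝ ℂ)) *ᵥ v)).re
      = a ⬝ᵥ (P *ᵥ a) + b ⬝ᵥ (P *ᵥ b) := by
    simp only [dotProduct, mulVec, Pi.star_apply, Complex.star_def, map_sum, Finset.mul_sum,
      Complex.re_sum, Complex.mul_re, Complex.mul_im, Complex.conj_re, Complex.conj_im,
      Matrix.map_apply, Complex.ofReal_re, Complex.ofReal_im, Complex.coe_algebraMap]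
    rw [← Finset.sum_add_distrib]
    refine Finset.sum_congr rfl fun i _ => ?_
    simp only [Finset.mul_sum, ← Finset.sum_add_distrib]
    refine Finset.sum_congr rfl fun j _ => ?_
    ring
  rw [key]
  rcases eq_or_ne a 0 with h0 | h0
  · have hb0 : b ≠ 0 := by
      intro hb0
      exact hv (funext fun i => Complex.ext (congrFun h0 i) (congrFun hb0 i))
    have h1 := hP.dotProduct_mulVec_pos hb0
    have h2 := hP.posSemidef.dotProduct_mulVec_nonneg a
    simp only [star_trivial] at h1 h2
    linarith
  · have h1 := hP.dotProduct_mulVec_pos h0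
    have h2 := hP.posSemidef.dotProduct_mulVec_nonneg b
    simp only [star_trivial] at h1 h2
    linarith

lemma eigen_norm_lt_one {n : ℕ}
    (M P Q : Matrix (Fin n) (Fin n) ℝ) (hP : P.PosDef) (hQ : Q.PosDef)
    (hlyap : Mᵀ * P * M - P = -Q) (μ : ℂ)
    (hμ : μ ∈ spectrum ℂ (M.map (algebraMap ℝ ℂ))) : ‖μ‖ < 1 := by
  set f := algebraMap ℝ ℂ
  set A := M.map f with hA
  rw [← AlgEquiv.spectrum_eq (Matrix.toLinAlgEquiv' : Matrix (Fin n) (Fin n) ℂ ≃ₐ[ℂ] _),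
    ← Module.End.hasEigenvalue_iff_mem_spectrum] at hμ
  obtain ⟨v, hv⟩ := hμ.exists_hasEigenvector
  have hvne : v ≠ 0 := hv.right
  have hAv : A *ᵥ v = μ • v := by
    have := hv.apply_eq_smul
    simpa using this
  -- A is "real": Aᴴ = Aᵀ
  have hAH : Aᴴ = Aᵀ := by
    ext i j
    simp [conjTranspose_apply, hA, Matrix.map_apply, f]
  have hstar : A *ᵥ star v = star (A *ᵥ v) := by
    rw [star_mulVec, hAH, vecMul_transpose]
  set p := star v ⬝ᵥ ((P.map f) *ᵥ v) with hp
  set q := star v ⬝ᵥ ((Q.map f) *ᵥ v) with hq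
  have hpr : 0 < p.re := quad_re_pos_aux hP v hvne
  have hqr : 0 < q.re := quad_re_pos_aux hQ v hvne
  -- quadratic form identity
  have hmain : star v ⬝ᵥ (((Mᵀ).map f * P.map f * M.map f) *ᵥ v)
      = (Complex.normSq μ : ℝ) * p := by
    rw [Matrix.transpose_map]
    rw [← hA, ← mulVec_mulVec, ← mulVec_mulVec, hAv, mulVec_smul, mulVec_smul, dotProduct_smul,
      dotProduct_mulVec, vecMul_transpose, hstar, hAv, star_smul, smul_dotProduct]
    rw [hp, smul_eq_mul, smul_eq_mul, ← mul_assoc]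
    congr 1
    rw [mul_comm]
    simp [Complex.normSq_eq_conj_mul_self]
  have hC := congrArg (f.mapMatrix) hlyap
  simp only [map_sub, map_neg, RingHom.mapMatrix_apply, Matrix.map_mul] at hC
  have heq := congrArg (fun X : Matrix (Fin n) (Fin n) ℂ => star v ⬝ᵥ (X *ᵥ v)) hC
  simp only [sub_mulVec, neg_mulVec, dotProduct_sub, dotProduct_neg] at heq
  rw [hmain] at heq
  -- take real parts
  have hre := congrArg Complex.re heq
  simp only [Complex.sub_re, Complex.neg_re, Complex.re_ofReal_mul] at hre
  -- Complex.normSq μ < 1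
  have hlt : Complex.normSq μ < 1 := by
    have : Complex.normSq μ * p.re = p.re - q.re := by linarith
    nlinarith
  have habs : ‖μ‖ ^ 2 < 1 := by
    rw [Complex.sq_norm]; exact hlt
  nlinarith [norm_nonneg μ]

theorem discrete_lyapunov_stability {n : ℕ}
    (M P Q : Matrix (Fin n) (Fin n) ℝ) (hP : P.PosDef) (hQ : Q.PosDef)
    (hlyap : Mᵀ * P * M - P = -Q) :
    spectralRadius ℂ (M.map (algebraMap ℝ ℂ)) < 1 := by
  set A := M.map (algebraMap ℝ ℂ)
  have hfin : (spectrum ℂ A).Finite := Matrix.finite_spectrum A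
  set F := hfin.toFinset with hF
  set r : NNReal := F.sup fun k => ‖k‖₊ with hr
  have hrlt : r < 1 := by
    rcases F.eq_empty_or_nonempty with h | h
    · simp [hr, h]
    · rw [hr, Finset.sup_lt_iff (by norm_num : (⊥ : NNReal) < 1)]
      intro k hk
      have := eigen_norm_lt_one M P Q hP hQ hlyap k (hfin.mem_toFinset.mp hk)
      rwa [← NNReal.coe_lt_coe, coe_nnnorm, NNReal.coe_one]
  have hle : spectralRadius ℂ A ≤ (r : ENNReal) := by
    rw [spectralRadius]
    refine iSup₂_le fun k hk => ?_
    exact_mod_cast Finset.le_sup (f := fun k => ‖k‖₊) (hfin.mem_toFinset.mpr hk)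
  calc spectralRadius ℂ A ≤ (r : ENNReal) := hle
    _ < 1 := by exact_mod_cast hrlt
end
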